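/- Let (Γ, I) be an independence alphabet in which every vertex has degree at most 1 (i.e., I is a partial matching). Then the trace monoid M(Γ, I) embeds into a direct product of two free monoids, namely into ({cᵢ : i ∈ ℕ})* × ({dᵢ : i ∈ ℕ})*, via the homomorphism sending aᵢ ↦ (cᵢ, dᵢ) and bᵢ ↦ (cᵢ, dᵢdᵢ) for each independent pair (aᵢ, bᵢ). -/

import Mathlib

/-- The congruence on the free monoid generated by `ab = ba` for independent `(a,b)`. -/
def traceCon {Γ : Type} (I : Γ → Γ → Prop) : Con (FreeMonoid Γ) :=
  conGen fun u v => ∃ a b : Γ, I a b ∧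
    u = FreeMonoid.of a * FreeMonoid.of b ∧ v = FreeMonoid.of b * FreeMonoid.of a

/-- The trace monoid of the independence alphabet `(Γ, I)`. -/
abbrev TraceMonoid {Γ : Type} (I : Γ → Γ → Prop) := (traceCon I).Quotient

namespace Stmt6Aux

open List

variable {Γ : Type} [DecidableEq Γ] {I : Γ → Γ → Prop}

/-- `R I u v` means the two words are trace-equivalent. -/
abbrev R (I : Γ → Γ → Prop) (u v : List Γ) : Prop :=
  (traceCon I) (FreeMonoid.ofList u) (FreeMonoid.ofList v)

lemma R_refl (u : List Γ) : R I u u := (traceCon I).refl _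

lemma R_append {u v u' v' : List Γ} (h : R I u v) (h' : R I u' v') :
    R I (u ++ u') (v ++ v') := (traceCon I).mul h h' 

lemma R_cons (x : Γ) {u v : List Γ} (h : R I u v) : R I (x :: u) (x :: v) := by
  simpa using R_append (R_refl [x]) h

lemma R_swap {a b : Γ} (h : I a b) : R I [a, b] [b, a] :=
  ConGen.Rel.of _ _ ⟨a, b, h, rfl, rfl⟩

lemma R_pow_comm {a b : Γ} (hba : I b a) :
    ∀ p, R I (b :: replicate p a) (replicate p a ++ [b])
  | 0 => R_refl [b]
  | (p + 1) => by
    have h1 : R I (b :: a :: replicate p a) (a :: b :: replicate p a) := by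
      simpa using R_append (R_swap hba) (R_refl (replicate p a))
    have h2 : R I (a :: (b :: replicate p a)) (a :: (replicate p a ++ [b])) :=
      R_cons a (R_pow_comm hba p)
    simp only [replicate_succ, cons_append]
    exact (traceCon I).trans h1 h2

lemma R_nf {a b : Γ} (hba : I b a) (hne : b ≠ a) :
    ∀ r : List Γ, (∀ y ∈ r, y = a ∨ y = b) →
      R I r (replicate (r.count a) a ++ replicate (r.count b) b)
  | [], _ => by simpa using R_refl ([] : List Γ)
  | x :: r, hmem => by
    have ih := R_nf hba hne r (fun y hy => hmem y (mem_cons_of_mem _ hy))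
    have h1 : R I (x :: r)
        (x :: (replicate (r.count a) a ++ replicate (r.count b) b)) := R_cons x ih
    rcases hmem x mem_cons_self with rfl | rfl
    · rw [count_cons_self, count_cons_of_ne (Ne.symm hne)]
      simpa [replicate_succ] using h1
    · rw [count_cons_self, count_cons_of_ne hne]
      have h2 := R_append (R_pow_comm hba (r.count a)) (R_refl (replicate (r.count x) x))
      have h3 := (traceCon I).trans h1 h2
      have heq : replicate (r.count a) a ++ replicate (r.count x + 1) x
          = (replicate (r.count a) a ++ [x]) ++ replicate (r.count x) x := by
        rw [replicate_succ, append_assoc, singleton_append]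
      rw [heq]
      exact h3

lemma R_pair {a b : Γ} (hba : I b a) (hne : b ≠ a) {r s : List Γ}
    (hr : ∀ y ∈ r, y = a ∨ y = b) (hs : ∀ y ∈ s, y = a ∨ y = b)
    (hca : r.count a = s.count a) (hcb : r.count b = s.count b) : R I r s := by
  have h1 := R_nf hba hne r hr
  have h2 := R_nf hba hne s hs
  rw [hca, hcb] at h1
  exact (traceCon I).trans h1 ((traceCon I).symm h2)

lemma count_pair {a b : Γ} (hne : a ≠ b) :
    ∀ r : List Γ, (∀ y ∈ r, y = a ∨ y = b) → r.count a + r.count b = r.length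
  | [], _ => by simp
  | x :: r, hmem => by
    have ih := count_pair hne r (fun y hy => hmem y (mem_cons_of_mem _ hy))
    rcases hmem x mem_cons_self with rfl | rfl
    · rw [count_cons_self, count_cons_of_ne hne]
      simp only [length_cons]; omega
    · rw [count_cons_self, count_cons_of_ne (Ne.symm hne)]
      simp only [length_cons]; omega

section B2

variable (m : Γ → ℕ) (dbl : Γ → Bool)

/-- the second-component contribution of one letter -/
def chunk (y : Γ) : List ℕ := if dbl y then [m y, m y] else [m y]

/-- the second component of the image of a word -/
def b2 (u : List Γ) : List ℕ := u.flatMap (chunk m dbl)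

lemma b2_nil : b2 m dbl [] = [] := rfl

lemma b2_cons (x : Γ) (u : List Γ) :
    b2 m dbl (x :: u) = chunk m dbl x ++ b2 m dbl u := by
  simp [b2]

lemma b2_append (u v : List Γ) :
    b2 m dbl (u ++ v) = b2 m dbl u ++ b2 m dbl v := by
  simp [b2]

lemma len_b2_pair {a b : Γ} (hne : a ≠ b) (hda : dbl a = false) (hdb : dbl b = true) :
    ∀ r : List Γ, (∀ y ∈ r, y = a ∨ y = b) →
      (b2 m dbl r).length = r.length + r.count b
  | [], _ => by simp [b2]
  | x :: r, hmem => by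
    have ih := len_b2_pair hne hda hdb r (fun y hy => hmem y (mem_cons_of_mem _ hy))
    rw [b2_cons, length_append, ih]
    rcases hmem x mem_cons_self with rfl | rfl
    · rw [count_cons_of_ne hne]
      simp [chunk, hda]; omega
    · rw [count_cons_self]
      simp [chunk, hdb]; omega

lemma b2_eq_replicate {i : ℕ} :
    ∀ r : List Γ, (∀ y ∈ r, m y = i) → b2 m dbl r = replicate (b2 m dbl r).length i := by
  intro r hr
  rw [eq_replicate_iff]
  refine ⟨rfl, ?_⟩
  intro x hx
  rcases mem_flatMap.mp hx with ⟨y, hy, hxy⟩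
  have hmy := hr y hy
  unfold chunk at hxy
  rcases Bool.eq_false_or_eq_true (dbl y) with h | h <;> simp [h] at hxy <;>
    simp [hxy, hmy] at * <;> omega

end B2

lemma rep_cancel {i : ℕ} :
    ∀ (k : ℕ) {k' : ℕ} {L L' : List ℕ},
      replicate k i ++ L = replicate k' i ++ L' →
      (∀ x, L.head? = some x → x ≠ i) → (∀ x, L'.head? = some x → x ≠ i) →
      k = k' ∧ L = L'
  | 0, k', L, L' => by
    intro h hL hL'
    cases k' with
    | zero => simpa using h
    | succ k' =>
      exfalso
      simp only [replicate_zero, nil_append, replicate_succ, cons_append] at h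
      exact hL i (by rw [h]; rfl) rfl
  | (k + 1), k', L, L' => by
    intro h hL hL'
    cases k' with
    | zero =>
      exfalso
      simp only [replicate_zero, nil_append, replicate_succ, cons_append] at h
      exact hL' i (by rw [← h]; rfl) rfl
    | succ k' =>
      simp only [replicate_succ, cons_append, cons.injEq, true_and] at h
      obtain ⟨hk, hLL⟩ := rep_cancel k h hL hL'
      exact ⟨by omega, hLL⟩

section Main

variable (m : Γ → ℕ) (dbl : Γ → Bool)

lemma dropWhile_first_false {α : Type*} (p : α → Bool) :
    ∀ (l : List α) {y : α} {t : List α}, l.dropWhile p = y :: t → p y = false := by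
  intro l
  induction l with
  | nil => intro y t h; simp at h
  | cons x l ih =>
    intro y t h
    rw [dropWhile_cons] at h
    by_cases hx : p x = true
    · rw [if_pos hx] at h; exact ih h
    · rw [if_neg hx] at h
      cases h
      simpa using hx

lemma b2_dropWhile_head_ne (i : ℕ) (u : List Γ) :
    ∀ x, (b2 m dbl (u.dropWhile (fun y => m y == i))).head? = some x → x ≠ i := by
  intro x hx
  rcases h' : u.dropWhile (fun y => m y == i) with _ | ⟨y, u''⟩
  · rw [h'] at hx; simp [b2] at hx
  · have hy : (fun y => m y == i) y = false := dropWhile_first_false _ u h'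
    have hyi : m y ≠ i := by simpa using hy
    rw [h', b2_cons] at hx
    unfold chunk at hx
    rcases Bool.eq_false_or_eq_true (dbl y) with h | h <;> simp [h] at hx <;>
      omega

lemma R_main (hm : ∀ x y, m x = m y → x = y ∨ I x y)
    (hmI : ∀ x y, I x y → m x = m y)
    (hdbl : ∀ x y, I x y → dbl x = !dbl y)
    (hirr : ∀ a, ¬ I a a) (hsym : ∀ a b, I a b → I b a)
    (hdeg : ∀ a b c, I a b → I a c → b = c) :
    ∀ n (u v : List Γ), u.length ≤ n → u.map m = v.map m →
      b2 m dbl u = b2 m dbl v → R I u v := by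
  intro n
  induction n with
  | zero =>
    intro u v hl hmap _
    have hu : u = [] := eq_nil_of_length_eq_zero (Nat.le_zero.mp hl)
    subst hu
    have hv : v = [] := map_eq_nil_iff.mp hmap.symm
    subst hv
    exact R_refl []
  | succ n ih =>
    intro u v hl hmap hb2
    rcases u with _ | ⟨c, u₀⟩
    · have hv : v = [] := map_eq_nil_iff.mp hmap.symm
      subst hv; exact R_refl []
    set i := m c with hi
    set p : Γ → Bool := fun y => m y == i with hp
    set u' := (c :: u₀).dropWhile p with hu'
    set v' := v.dropWhile p with hv'
    set r := (c :: u₀).takeWhile p with hr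
    set s := v.takeWhile p with hs
    have hru : r ++ u' = c :: u₀ := by
      rw [hr, hu']; exact takeWhile_append_dropWhile ..
    have hsv : s ++ v' = v := by
      rw [hs, hv']; exact takeWhile_append_dropWhile ..
    -- maps of the pieces
    have hmap_tw : r.map m = s.map m := by
      have h1 : ((c :: u₀).map m).takeWhile (· == i) = (v.map m).takeWhile (· == i) := by
        rw [hmap]
      rw [takeWhile_map, takeWhile_map] at h1
      simpa [Function.comp_def, hp, hr, hs] using h1
    have hmap_dw : u'.map m = v'.map m := by
      have h1 : ((c :: u₀).map m).dropWhile (· == i) = (v.map m).dropWhile (· == i) := by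
        rw [hmap]
      rw [dropWhile_map, dropWhile_map] at h1
      simpa [Function.comp_def, hp, hu', hv'] using h1
    have hlen_rs : r.length = s.length := by
      have := congrArg List.length hmap_tw; simpa using this
    -- r is nonempty
    have hpc : p c = true := by simp [hp, hi]
    have hrc : r = c :: u₀.takeWhile p := by rw [hr, takeWhile_cons_of_pos hpc]
    -- membership facts
    have hmem_r : ∀ y ∈ r, m y = i := by
      intro y hy
      have := mem_takeWhile_imp (hr ▸ hy)
      simpa [hp] using this
    have hmem_s : ∀ y ∈ s, m y = i := by
      intro y hy
      have := mem_takeWhile_imp (hs ▸ hy)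
      simpa [hp] using this
    -- b2 decomposition
    have hb2u : b2 m dbl r ++ b2 m dbl u' = b2 m dbl (c :: u₀) := by
      rw [← b2_append, hru]
    have hb2v : b2 m dbl s ++ b2 m dbl v' = b2 m dbl v := by
      rw [← b2_append, hsv]
    have hrep_r := b2_eq_replicate m dbl r hmem_r
    have hrep_s := b2_eq_replicate m dbl s hmem_s
    have hkey : replicate (b2 m dbl r).length i ++ b2 m dbl u' =
        replicate (b2 m dbl s).length i ++ b2 m dbl v' := by
      rw [← hrep_r, ← hrep_s, hb2u, hb2v, hb2]
    have hhu := b2_dropWhile_head_ne m dbl i (c :: u₀)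
    have hhv := b2_dropWhile_head_ne m dbl i v
    obtain ⟨hklen, hb2'⟩ := rep_cancel _ hkey (by rw [← hu'] at hhu; exact hhu)
      (by rw [← hv'] at hhv; exact hhv)
    -- induction for the tails
    have hlen_u' : u'.length ≤ n := by
      have h1 : u' = u₀.dropWhile p := by rw [hu', dropWhile_cons_of_pos hpc]
      have h1' : u'.length = (u₀.dropWhile p).length := by rw [h1]
      have h2 : (u₀.dropWhile p).length ≤ u₀.length := (dropWhile_sublist _).length_le
      have h3 : u₀.length ≤ n := by simpa using hl
      simp only [length_cons] at hl
      omega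
    have htail := ih u' v' hlen_u' hmap_dw hb2'
    -- the head runs are equivalent
    have hhead : R I r s := by
      by_cases hex : ∃ d, I c d
      · obtain ⟨d, hcd⟩ := hex
        have hmd : m d = i := (hmI c d hcd).symm
        have hnecd : c ≠ d := by rintro rfl; exact hirr c hcd
        have hclass : ∀ y, m y = i → y = c ∨ y = d := by
          intro y hy
          rcases hm y c (by rw [hy]) with h | h
          · exact Or.inl h
          · exact Or.inr (hdeg c y d (hsym y c h) hcd)
        have hdd := hdbl c d hcd
        -- choose the "single" letter a and "double" letter b
        by_cases hdc : dbl c = false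
        · -- c single, d double
          have hdbd : dbl d = true := by
            rcases Bool.eq_false_or_eq_true (dbl d) with h | h
            · exact h
            · rw [h] at hdd; simp [hdc] at hdd
          have hmemr : ∀ y ∈ r, y = c ∨ y = d := fun y hy => hclass y (hmem_r y hy)
          have hmems : ∀ y ∈ s, y = c ∨ y = d := fun y hy => hclass y (hmem_s y hy)
          have hlr := len_b2_pair m dbl hnecd hdc hdbd r hmemr
          have hls := len_b2_pair m dbl hnecd hdc hdbd s hmems
          have hb2len : (b2 m dbl r).length = (b2 m dbl s).length := hklen
          have hcount_d : r.count d = s.count d := by omega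
          have hcr := count_pair hnecd r hmemr
          have hcs := count_pair hnecd s hmems
          have hcount_c : r.count c = s.count c := by omega
          exact R_pair (hsym c d hcd) (Ne.symm hnecd) hmemr hmems hcount_c hcount_d
        · -- c double, d single
          have hdc' : dbl c = true := by
            rcases Bool.eq_false_or_eq_true (dbl c) with h | h
            · exact h
            · exact absurd h hdc
          have hdbd : dbl d = false := by
            rcases Bool.eq_false_or_eq_true (dbl d) with h | h
            · rw [h] at hdd; simp [hdc'] at hdd
            · exact h
          have hmemr : ∀ y ∈ r, y = d ∨ y = c := fun y hy =>
            (hclass y (hmem_r y hy)).symm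
          have hmems : ∀ y ∈ s, y = d ∨ y = c := fun y hy =>
            (hclass y (hmem_s y hy)).symm
          have hlr := len_b2_pair m dbl (Ne.symm hnecd) hdbd hdc' r hmemr
          have hls := len_b2_pair m dbl (Ne.symm hnecd) hdbd hdc' s hmems
          have hb2len : (b2 m dbl r).length = (b2 m dbl s).length := hklen
          have hcount_c : r.count c = s.count c := by omega
          have hcr := count_pair (Ne.symm hnecd) r hmemr
          have hcs := count_pair (Ne.symm hnecd) s hmems
          have hcount_d : r.count d = s.count d := by omega
          exact R_pair hcd hnecd hmemr hmems hcount_d hcount_c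
      · -- c has no partner: all letters in the runs are `c`
        have hallr : ∀ y ∈ r, y = c := by
          intro y hy
          rcases hm y c (by rw [hmem_r y hy]) with h | h
          · exact h
          · exact absurd ⟨y, hsym y c h⟩ hex
        have halls : ∀ y ∈ s, y = c := by
          intro y hy
          rcases hm y c (by rw [hmem_s y hy]) with h | h
          · exact h
          · exact absurd ⟨y, hsym y c h⟩ hex
        have h1 : r = replicate r.length c := eq_replicate_iff.mpr ⟨rfl, hallr⟩
        have h2 : s = replicate s.length c := eq_replicate_iff.mpr ⟨rfl, halls⟩
        rw [h1, h2, hlen_rs]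
        exact R_refl _
    have := R_append hhead htail
    rw [hru, hsv] at this
    exact this

end Main

end Stmt6Aux

/-- If every vertex of the independence alphabet has degree at most 1 (a partial
matching), then the trace monoid embeds into the direct product of two free monoids
over countably infinite alphabets `{cᵢ}` and `{dᵢ}`, via a homomorphism mapping each
letter to `(cᵢ, dᵢ)` or `(cᵢ, dᵢdᵢ)`, with independent letters sharing the index `i`. -/
theorem stmt6 (Γ : Type) [Countable Γ] (I : Γ → Γ → Prop)
    (hirr : ∀ a, ¬ I a a) (hsym : ∀ a b, I a b → I b a)
    (hdeg : ∀ a b c, I a b → I a c → b = c) :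
    ∃ f : TraceMonoid I →* FreeMonoid ℕ × FreeMonoid ℕ, Function.Injective f ∧
      ∃ idx : Γ → ℕ,
        (∀ a : Γ,
          f ((traceCon I).mk' (FreeMonoid.of a)) =
            (FreeMonoid.of (idx a), FreeMonoid.of (idx a)) ∨
          f ((traceCon I).mk' (FreeMonoid.of a)) =
            (FreeMonoid.of (idx a), FreeMonoid.of (idx a) * FreeMonoid.of (idx a))) ∧
        ∀ a b : Γ, I a b → idx a = idx b := by
  classical
  haveI : DecidableEq Γ := Classical.decEq Γ
  open Stmt6Aux List in
  obtain ⟨e, he⟩ := Countable.exists_injective_nat Γ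
  -- the partner function
  set par : Γ → Γ := fun a => if h : ∃ b, I a b then h.choose else a with hpar
  have hparI : ∀ a, par a = a ∨ I a (par a) := by
    intro a
    by_cases h : ∃ b, I a b
    · right; simp only [hpar, dif_pos h]; exact h.choose_spec
    · left; simp only [hpar, dif_neg h]
  have hpar_eq : ∀ a b, I a b → par a = b := by
    intro a b hab
    have h : ∃ b, I a b := ⟨b, hab⟩
    simp only [hpar, dif_pos h]
    exact hdeg a h.choose b h.choose_spec hab
  set m : Γ → ℕ := fun a => min (e a) (e (par a)) with hmdef
  set dbl : Γ → Bool := fun a => decide (e (par a) < e a) with hdbldef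
  -- key properties
  have hm : ∀ x y, m x = m y → x = y ∨ I x y := by
    intro x y hxy
    simp only [hmdef] at hxy
    have hmcx := min_choice (e x) (e (par x))
    have hmcy := min_choice (e y) (e (par y))
    rcases hmcx with h1 | h1 <;> rcases hmcy with h2 | h2 <;> rw [h1, h2] at hxy
    · exact Or.inl (he hxy)
    · -- e x = e (par y)
      have hx : x = par y := he hxy
      rcases hparI y with h | h
      · rw [h] at hx; exact Or.inl hx
      · rw [← hx] at h; exact Or.inr (hsym y x h)
    · -- e (par x) = e y
      have hy : par x = y := he hxy
      rcases hparI x with h | h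
      · rw [h] at hy; exact Or.inl hy
      · rw [hy] at h; exact Or.inr h
    · -- e (par x) = e (par y)
      have hpp : par x = par y := he hxy
      rcases hparI x with h3 | h3
      · rw [h3] at hpp
        rcases hparI y with h4 | h4
        · rw [h4] at hpp; exact Or.inl hpp
        · rw [← hpp] at h4; exact Or.inr (hsym y x h4)
      · rcases hparI y with h4 | h4
        · rw [h4] at hpp
          rw [hpp] at h3
          exact Or.inr h3
        · rw [hpp] at h3
          exact Or.inl (hdeg (par y) x y (hsym x (par y) h3) (hsym y (par y) h4))
  have hmI : ∀ x y, I x y → m x = m y := by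
    intro x y hxy
    have h1 : par x = y := hpar_eq x y hxy
    have h2 : par y = x := hpar_eq y x (hsym x y hxy)
    simp only [hmdef, h1, h2, min_comm]
  have hdbl : ∀ x y, I x y → dbl x = !dbl y := by
    intro x y hxy
    have h1 : par x = y := hpar_eq x y hxy
    have h2 : par y = x := hpar_eq y x (hsym x y hxy)
    have hne : e x ≠ e y := fun h => hirr x (he h ▸ hxy)
    simp only [hdbldef, h1, h2]
    by_cases h : e y < e x
    · simp [h, Nat.not_lt.mpr (Nat.le_of_lt h)]
    · have : e x < e y := lt_of_le_of_ne (Nat.not_lt.mp h) hne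
      simp [h, this]
  -- the homomorphism on the free monoid
  set F : Γ → FreeMonoid ℕ × FreeMonoid ℕ := fun y =>
    (FreeMonoid.ofList [m y], FreeMonoid.ofList (chunk m dbl y)) with hF
  set Φ : FreeMonoid Γ →* FreeMonoid ℕ × FreeMonoid ℕ := FreeMonoid.lift F with hΦ
  have hΦ_eq : ∀ u : List Γ, Φ (FreeMonoid.ofList u) =
      (FreeMonoid.ofList (u.map m), FreeMonoid.ofList (b2 m dbl u)) := by
    intro u
    induction u with
    | nil => simp [b2_nil]; rfl
    | cons x u ihu =>
      rw [FreeMonoid.ofList_cons, map_mul, ihu, hΦ, FreeMonoid.lift_eval_of]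
      rw [map_cons, b2_cons, FreeMonoid.ofList_cons, FreeMonoid.ofList_append]
      rfl
  have hker : traceCon I ≤ Con.ker Φ := by
    rw [traceCon]
    apply Con.conGen_le.mpr
    rintro x y ⟨a, b, hab, rfl, rfl⟩
    have hmab : m a = m b := hmI a b hab
    have hd := hdbl a b hab
    show Φ _ = Φ _
    have h1 : ∀ z w : Γ, Φ (FreeMonoid.of z * FreeMonoid.of w) = F z * F w := by
      intro z w; rw [map_mul, hΦ, FreeMonoid.lift_eval_of, FreeMonoid.lift_eval_of]
    rw [h1, h1]
    have hc : chunk m dbl a ++ chunk m dbl b = chunk m dbl b ++ chunk m dbl a := by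
      unfold chunk
      rcases Bool.eq_false_or_eq_true (dbl a) with h | h <;>
        rcases Bool.eq_false_or_eq_true (dbl b) with h' | h' <;>
          simp [h, h', hmab]
    simp only [hF, Prod.mk_mul_mk, ← FreeMonoid.ofList_append, Prod.mk.injEq]
    constructor
    · rw [hmab]
    · rw [hc]
  -- assemble
  refine ⟨(traceCon I).lift Φ hker, ?_, m, ?_, hmI⟩
  · intro x y
    refine Con.induction_on₂ x y ?_
    intro w z h
    rw [Con.lift_coe, Con.lift_coe] at h
    have h1 := hΦ_eq (FreeMonoid.toList w)
    have h2 := hΦ_eq (FreeMonoid.toList z)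
    rw [FreeMonoid.ofList_toList] at h1 h2
    rw [h1, h2, Prod.mk.injEq] at h
    obtain ⟨ha, hb⟩ := h
    have hmap : (FreeMonoid.toList w).map m = (FreeMonoid.toList z).map m :=
      Equiv.injective FreeMonoid.ofList ha
    have hb2 : b2 m dbl (FreeMonoid.toList w) = b2 m dbl (FreeMonoid.toList z) :=
      Equiv.injective FreeMonoid.ofList hb
    have hR := R_main m dbl hm hmI hdbl hirr hsym hdeg
      (FreeMonoid.toList w).length (FreeMonoid.toList w) (FreeMonoid.toList z)
      le_rfl hmap hb2
    unfold R at hR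
    rw [FreeMonoid.ofList_toList, FreeMonoid.ofList_toList] at hR
    exact ((traceCon I).eq).mpr hR
  · intro a
    rw [Con.lift_mk', hΦ, FreeMonoid.lift_eval_of, hF]
    by_cases h : dbl a = true
    · right
      simp only [chunk, h, if_true]
      rfl
    · left
      simp only [chunk, h, if_false]
      rfl
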